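/- arXiv:2405.07219 — 2 statements merged into one kernel-verified Lean document; each statement's English description precedes it below -/
import Mathlib

section
/- Let $\xi$ be a transcendental real number, $n$ a positive integer, and $(P_i)_{i \geq 0}$ a sequence of minimal polynomials associated to $n$ and $\xi$. For each $i \geq 0$, the set $\{P_i, P_{i+1}\}$ forms a $\mathbb{Z}$-basis of the lattice $V_i \cap \mathbb{Z}[X]_{\leq n}$, where $V_i$ is the real span of $P_i$ and $P_{i+1}$. -/
open Polynomial

/-- Naive height of an integer polynomial, as a real number. -/
noncomputable def heightZ (P : Polynomial ℤ) : ℝ := ⨆ i : ℕ, |(P.coeff i : ℝ)|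

/-- The real polynomial obtained from an integer polynomial. -/
noncomputable def toR (P : Polynomial ℤ) : Polynomial ℝ := P.map (Int.castRingHom ℝ)

lemma bddAbove_height (P : Polynomial ℤ) :
    BddAbove (Set.range fun j => |(P.coeff j : ℝ)|) := by
  apply Set.Finite.bddAbove
  apply Set.Finite.subset
    (Set.Finite.insert (0 : ℝ) (((Set.finite_Iic P.natDegree).image
      (fun j => |(P.coeff j : ℝ)|))))
  rintro x ⟨j, rfl⟩
  by_cases h : j ≤ P.natDegree
  · exact Set.mem_insert_of_mem _ ⟨j, h, rfl⟩
  · simp [Polynomial.coeff_eq_zero_of_natDegree_lt (lt_of_not_ge h)]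

lemma coeff_le_height (P : Polynomial ℤ) (j : ℕ) : |(P.coeff j : ℝ)| ≤ heightZ P :=
  le_ciSup (bddAbove_height P) j

lemma height_nonneg (P : Polynomial ℤ) : 0 ≤ heightZ P :=
  le_trans (abs_nonneg _) (coeff_le_height P 0)

lemma height_le (P : Polynomial ℤ) {M : ℝ} (h : ∀ j, |(P.coeff j : ℝ)| ≤ M) :
    heightZ P ≤ M := ciSup_le h

lemma toR_coeff (P : Polynomial ℤ) (j : ℕ) : (toR P).coeff j = (P.coeff j : ℝ) :=
  coeff_map _ _

lemma toR_eval (ξ : ℝ) (P : Polynomial ℤ) : (toR P).eval ξ = Polynomial.aeval ξ P := by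
  simp [toR, aeval_def, eval_map]

lemma aeval_ne_zero_of_trans {ξ : ℝ} (hξ : Transcendental ℚ ξ) {Q : Polynomial ℤ}
    (hQ : Q ≠ 0) : Polynomial.aeval ξ Q ≠ 0 := by
  intro h
  apply hξ
  refine ⟨Q.map (Int.castRingHom ℚ), ?_, ?_⟩
  · exact (Polynomial.map_ne_zero_iff Int.cast_injective).mpr hQ
  · rw [show Int.castRingHom ℚ = algebraMap ℤ ℚ from rfl, aeval_map_algebraMap]
    exact h

/-- A sequence of minimal polynomials associated to `n` and `ξ`. -/
def IsMinimalSeq (n : ℕ) (ξ : ℝ) (P : ℕ → Polynomial ℤ) : Prop :=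
  (∀ i, P i ≠ 0) ∧ (∀ i, (P i).natDegree ≤ n) ∧
  (∀ i, heightZ (P i) < heightZ (P (i + 1))) ∧
  (∀ i, |Polynomial.aeval ξ (P (i + 1))| < |Polynomial.aeval ξ (P i)|) ∧
  (∀ i, ∀ Q : Polynomial ℤ, Q ≠ 0 → Q.natDegree ≤ n →
    |Polynomial.aeval ξ Q| < |Polynomial.aeval ξ (P i)| → heightZ (P (i + 1)) ≤ heightZ Q)

/-- `{P_i, P_{i+1}}` is a `ℤ`-basis of `V_i ∩ ℤ[X]_{≤ n}` where
`V_i = ⟨P_i, P_{i+1}⟩_ℝ`. -/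
theorem minimal_pair_zbasis (n : ℕ) (hn : 1 ≤ n) (ξ : ℝ) (hξ : Transcendental ℚ ξ)
    (P : ℕ → Polynomial ℤ) (hP : IsMinimalSeq n ξ P) (i : ℕ) :
    LinearIndependent ℝ ![toR (P i), toR (P (i + 1))] ∧
      ∀ Q : Polynomial ℤ,
        toR Q ∈ Submodule.span ℝ ({toR (P i), toR (P (i + 1))} : Set (Polynomial ℝ)) →
        ∃ a b : ℤ, Q = a • P i + b • P (i + 1) := by
  obtain ⟨hne, hdeg, hH, hev, hmin⟩ := hP
  have hp0 : Polynomial.aeval ξ (P i) ≠ 0 := aeval_ne_zero_of_trans hξ (hne i)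
  have hpabs : 0 < |Polynomial.aeval ξ (P i)| := abs_pos.mpr hp0
  constructor
  · rw [LinearIndependent.pair_iff]
    intro s t hst
    have hco : ∀ j, s * ((P i).coeff j : ℝ) + t * ((P (i+1)).coeff j : ℝ) = 0 := by
      intro j
      have := congrArg (fun R => Polynomial.coeff R j) hst
      simpa [toR_coeff, smul_eq_mul] using this
    have hevz : s * Polynomial.aeval ξ (P i) + t * Polynomial.aeval ξ (P (i+1)) = 0 := by
      have := congrArg (fun R => Polynomial.eval ξ R) hst
      simpa [toR_eval, smul_eq_mul] using this
    by_cases ht : t = 0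
    · subst ht
      have hs : s = 0 := by
        simp at hevz
        rcases hevz with h' | h'
        · exact h'
        · exact absurd h' hp0
      exact ⟨hs, rfl⟩
    · exfalso
      set c : ℝ := -s / t with hc
      have hq : Polynomial.aeval ξ (P (i+1)) = c * Polynomial.aeval ξ (P i) := by
        rw [hc, div_mul_eq_mul_div, eq_div_iff ht]
        linear_combination hevz
      have hclt : |c| < 1 := by
        have habs : |Polynomial.aeval ξ (P (i+1))| = |c| * |Polynomial.aeval ξ (P i)| := by
          rw [hq, abs_mul]
        nlinarith [hev i, abs_nonneg c]
      have hcoef : ∀ j, ((P (i+1)).coeff j : ℝ) = c * ((P i).coeff j : ℝ) := by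
        intro j
        have h := hco j
        rw [hc, div_mul_eq_mul_div, eq_div_iff ht]
        linear_combination h
      have hle : heightZ (P (i+1)) ≤ heightZ (P i) := by
        apply height_le
        intro j
        rw [hcoef j, abs_mul]
        calc |c| * |((P i).coeff j : ℝ)| ≤ 1 * heightZ (P i) := by
              apply mul_le_mul (le_of_lt hclt) (coeff_le_height _ j) (abs_nonneg _)
              norm_num
          _ = heightZ (P i) := one_mul _
      linarith [hH i]
  · intro Q hQ
    rw [Submodule.mem_span_pair] at hQ
    obtain ⟨s, t, hst⟩ := hQ
    have hco : ∀ j, (Q.coeff j : ℝ) = s * ((P i).coeff j : ℝ) + t * ((P (i+1)).coeff j : ℝ) := by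
      intro j
      have := congrArg (fun R => Polynomial.coeff R j) hst
      simpa [toR_coeff, smul_eq_mul] using this.symm
    have hevq : Polynomial.aeval ξ Q
        = s * Polynomial.aeval ξ (P i) + t * Polynomial.aeval ξ (P (i+1)) := by
      have := congrArg (fun R => Polynomial.eval ξ R) hst
      simpa [toR_eval, smul_eq_mul] using this.symm
    set a : ℤ := round s with ha
    set b : ℤ := round t with hb'
    set R : Polynomial ℤ := Q - a • P i - b • P (i+1) with hR
    by_cases hR0 : R = 0
    · refine ⟨a, b, ?_⟩
      have h0 : Q - (a • P i + b • P (i+1)) = 0 := by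
        rw [sub_add_eq_sub_sub]; exact hR0
      exact sub_eq_zero.mp h0
    · exfalso
      set u : ℝ := s - a with hu
      set v : ℝ := t - b with hv
      have hu2 : |u| ≤ 1/2 := abs_sub_round s
      have hv2 : |v| ≤ 1/2 := abs_sub_round t
      have hRco : ∀ j, (R.coeff j : ℝ)
          = u * ((P i).coeff j : ℝ) + v * ((P (i+1)).coeff j : ℝ) := by
        intro j
        have h1 : R.coeff j = Q.coeff j - a * (P i).coeff j - b * (P (i+1)).coeff j := by
          simp [hR, Polynomial.coeff_sub, zsmul_eq_mul]
        rw [h1]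
        push_cast
        rw [hco j, hu, hv]
        ring
      have hRdeg : R.natDegree ≤ n := by
        rw [Polynomial.natDegree_le_iff_coeff_eq_zero]
        intro N hN
        have h1 : (P i).coeff N = 0 :=
          Polynomial.coeff_eq_zero_of_natDegree_lt (lt_of_le_of_lt (hdeg i) hN)
        have h2 : (P (i+1)).coeff N = 0 :=
          Polynomial.coeff_eq_zero_of_natDegree_lt (lt_of_le_of_lt (hdeg (i+1)) hN)
        have h3 := hRco N
        rw [h1, h2] at h3
        exact_mod_cast (by simpa using h3 : (R.coeff N : ℝ) = 0)
      have hRev : Polynomial.aeval ξ R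
          = u * Polynomial.aeval ξ (P i) + v * Polynomial.aeval ξ (P (i+1)) := by
        have h1 : Polynomial.aeval ξ R = Polynomial.aeval ξ Q
            - (a : ℝ) * Polynomial.aeval ξ (P i)
            - (b : ℝ) * Polynomial.aeval ξ (P (i+1)) := by
          simp [hR, zsmul_eq_mul]
        rw [h1, hevq, hu, hv]
        ring
      have hRlt : |Polynomial.aeval ξ R| < |Polynomial.aeval ξ (P i)| := by
        rw [hRev]
        calc |u * Polynomial.aeval ξ (P i) + v * Polynomial.aeval ξ (P (i+1))|
            ≤ |u| * |Polynomial.aeval ξ (P i)| + |v| * |Polynomial.aeval ξ (P (i+1))| := by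
              apply le_trans (abs_add_le _ _); rw [abs_mul, abs_mul]
          _ ≤ (1/2) * |Polynomial.aeval ξ (P i)| + (1/2) * |Polynomial.aeval ξ (P (i+1))| := by
              apply add_le_add
              · exact mul_le_mul_of_nonneg_right hu2 (abs_nonneg _)
              · exact mul_le_mul_of_nonneg_right hv2 (abs_nonneg _)
          _ < |Polynomial.aeval ξ (P i)| := by nlinarith [hev i]
      have hmin' := hmin i R hR0 hRdeg hRlt
      have hRht : heightZ R ≤ (1/2) * heightZ (P i) + (1/2) * heightZ (P (i+1)) := by
        apply height_le
        intro j
        rw [hRco j]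
        calc |u * ((P i).coeff j : ℝ) + v * ((P (i+1)).coeff j : ℝ)|
            ≤ |u| * |((P i).coeff j : ℝ)| + |v| * |((P (i+1)).coeff j : ℝ)| := by
              apply le_trans (abs_add_le _ _); rw [abs_mul, abs_mul]
          _ ≤ (1/2) * heightZ (P i) + (1/2) * heightZ (P (i+1)) := by
              apply add_le_add
              · exact mul_le_mul hu2 (coeff_le_height _ j) (abs_nonneg _) (by norm_num)
              · exact mul_le_mul hv2 (coeff_le_height _ j) (abs_nonneg _) (by norm_num)
      have := hH i
      linarith
end

section
/- Let $m \geq 1$, $\xi$ real, and set $\Xi_m = (1, \xi, \dots, \xi^m)$. There is a constant $c > 0$ depending only on $m$ and $\xi$ such that for any $k \geq 1$ linearly independent polynomials $P_1, \dots, P_k \in \mathbb{Z}[X]_{\leq m}$ (identified with integer vectors in $\mathbb{Z}^{m+1}$ via coefficients), the span $V = \langle P_1, \dots, P_k\rangle_{\mathbb{R}}$ satisfies $\hat H^*(V) \leq c \sum_{i=1}^k \frac{|P_i(\xi)|}{H(P_i)} \prod_{j=1}^k H(P_j)$, where $\hat H^*(V) = \| \Xi_m \lrcorner (\mathbf{x}_1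 \wedge \cdots \wedge \mathbf{x}_k) \|$ for any $\mathbb{Z}$-basis $(\mathbf{x}_1, \dots, \mathbf{x}_k)$ of $V \cap \mathbb{Z}^{m+1}$. -/
open Matrix Polynomial

/-- The coefficient vector of an integer polynomial of degree at most `m`. -/
def toVec (m : ℕ) (P : Polynomial ℤ) : Fin (m + 1) → ℝ := fun j => (P.coeff j : ℝ)

/-- `Ξ_m = (1, ξ, …, ξ^m)`. -/
def XiVec (m : ℕ) (ξ : ℝ) : Fin (m + 1) → ℝ := fun j => ξ ^ (j : ℕ)

/-- Plücker coordinate of `x₁ ∧ ⋯ ∧ x_k` at a subset `s` of cardinality `k`. -/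
noncomputable def wedgeCoord {N k : ℕ} (x : Fin k → Fin N → ℝ)
    (s : {s : Finset (Fin N) // s.card = k}) : ℝ :=
  Matrix.det (Matrix.of fun i j : Fin k => x j (s.1.orderIsoOfFin s.2 i))

/-- Coordinates of the contraction `y ⌟ (x₀ ∧ ⋯ ∧ x_r)
= ∑ᵢ (-1)^{r-i} ⟨xᵢ, y⟩ x₀ ∧ ⋯ ∧ x̂ᵢ ∧ ⋯ ∧ x_r`. -/
noncomputable def contractCoord {N r : ℕ} (y : Fin N → ℝ)
    (x : Fin (r + 1) → Fin N → ℝ) (s : {s : Finset (Fin N) // s.card = r}) : ℝ :=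
  ∑ i : Fin (r + 1), (-1 : ℝ) ^ (r - (i : ℕ)) * (x i ⬝ᵥ y) *
    wedgeCoord (fun a => x (i.succAbove a)) s

/-- `‖y ⌟ (x₀ ∧ ⋯ ∧ x_r)‖`: the Euclidean norm of the contracted multivector. -/
noncomputable def contractNorm {N r : ℕ} (y : Fin N → ℝ)
    (x : Fin (r + 1) → Fin N → ℝ) : ℝ :=
  Real.sqrt (∑ s : {s : Finset (Fin N) // s.card = r}, (contractCoord y x s) ^ 2)

/-- `xs` is a `ℤ`-basis of `V ∩ ℤ^{m+1}` spanning `V` over `ℝ`. -/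
def IsZBasis {m k : ℕ} (V : Submodule ℝ (Fin (m + 1) → ℝ))
    (xs : Fin k → Fin (m + 1) → ℝ) : Prop :=
  (∀ i j, ∃ z : ℤ, xs i j = (z : ℝ)) ∧
  Submodule.span ℝ (Set.range xs) = V ∧
  LinearIndependent ℝ xs ∧
  ∀ v ∈ V, (∀ j, ∃ z : ℤ, v j = (z : ℝ)) →
    ∃ c : Fin k → ℤ, v = ∑ i, (c i : ℝ) • xs i

lemma heightZ_bdd (P : Polynomial ℤ) : BddAbove (Set.range fun i : ℕ => |(P.coeff i : ℝ)|) := by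
  refine ⟨∑ i ∈ P.support, |(P.coeff i : ℝ)|, ?_⟩
  rintro x ⟨i, rfl⟩
  simp only []
  by_cases h : i ∈ P.support
  · exact Finset.single_le_sum (f := fun j => |(P.coeff j : ℝ)|) (fun j _ => abs_nonneg _) h
  · rw [show |(P.coeff i : ℝ)| = 0 by rw [Polynomial.notMem_support_iff.mp h]; simp]
    exact Finset.sum_nonneg fun j _ => abs_nonneg _

lemma abs_coeff_le_heightZ (P : Polynomial ℤ) (i : ℕ) : |(P.coeff i : ℝ)| ≤ heightZ P :=
  le_ciSup (heightZ_bdd P) i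

lemma one_le_heightZ {P : Polynomial ℤ} (h : P ≠ 0) : 1 ≤ heightZ P := by
  refine le_trans ?_ (abs_coeff_le_heightZ P P.natDegree)
  have h0 : P.coeff P.natDegree ≠ 0 := Polynomial.leadingCoeff_ne_zero.mpr h
  have := Int.one_le_abs (by exact_mod_cast h0 : P.coeff P.natDegree ≠ 0)
  calc (1:ℝ) = ((1:ℤ):ℝ) := by norm_num
    _ ≤ ((|P.coeff P.natDegree| : ℤ) : ℝ) := by exact_mod_cast this
    _ = |(P.coeff P.natDegree : ℝ)| := by push_cast; ring

lemma heightZ_pos {P : Polynomial ℤ} (h : P ≠ 0) : 0 < heightZ P :=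
  lt_of_lt_of_le one_pos (one_le_heightZ h)

lemma abs_det_le' {n : ℕ} (M : Matrix (Fin n) (Fin n) ℝ) (b : Fin n → ℝ)
    (hb : ∀ i j, |M i j| ≤ b j) :
    |M.det| ≤ (n.factorial : ℝ) * ∏ j, b j := by
  rw [Matrix.det_apply]
  refine (Finset.abs_sum_le_sum_abs _ _).trans ?_
  have key : ∀ σ : Equiv.Perm (Fin n),
      |Equiv.Perm.sign σ • ∏ i, M (σ i) i| ≤ ∏ j, b j := by
    intro σ
    rw [Units.smul_def, zsmul_eq_mul, abs_mul]
    have h1 : |((Equiv.Perm.sign σ : ℤ) : ℝ)| = 1 := by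
      rcases Int.units_eq_one_or (Equiv.Perm.sign σ) with h | h <;> simp [h]
    rw [h1, one_mul, Finset.abs_prod]
    exact Finset.prod_le_prod (fun j _ => abs_nonneg _) (fun j _ => hb _ _)
  calc ∑ σ : Equiv.Perm (Fin n), |Equiv.Perm.sign σ • ∏ i, M (σ i) i|
      ≤ ∑ _σ : Equiv.Perm (Fin n), ∏ j, b j := Finset.sum_le_sum fun σ _ => key σ
    _ = (n.factorial : ℝ) * ∏ j, b j := by
        rw [Finset.sum_const, nsmul_eq_mul]
        congr 1
        simp [Fintype.card_perm]

noncomputable def cMat {N r : ℕ} (y : Fin N → ℝ) (x : Fin (r + 1) → Fin N → ℝ)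
    (s : {s : Finset (Fin N) // s.card = r}) : Matrix (Fin (r + 1)) (Fin (r + 1)) ℝ :=
  Matrix.of (Fin.snoc (fun a j => x j (s.1.orderIsoOfFin s.2 a)) (fun j => x j ⬝ᵥ y))

lemma contractCoord_eq_det {N r : ℕ} (y : Fin N → ℝ) (x : Fin (r + 1) → Fin N → ℝ)
    (s : {s : Finset (Fin N) // s.card = r}) :
    contractCoord y x s = (cMat y x s).det := by
  rw [Matrix.det_succ_row _ (Fin.last r)]
  unfold contractCoord
  refine Finset.sum_congr rfl fun j _ => ?_
  have hsign : ((-1 : ℝ)) ^ ((Fin.last r : ℕ) + (j : ℕ)) = (-1) ^ (r - (j : ℕ)) := by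
    have hj : (j : ℕ) ≤ r := Fin.is_le j
    have h2 : (Fin.last r : ℕ) + (j:ℕ) = (r - (j:ℕ)) + 2 * (j:ℕ) := by
      simp only [Fin.val_last]; omega
    rw [h2, pow_add, pow_mul]; simp
  have hentry : cMat y x s (Fin.last r) j = x j ⬝ᵥ y := by
    simp [cMat, Fin.snoc_last]
  have hsub : (cMat y x s).submatrix (Fin.last r).succAbove j.succAbove
      = Matrix.of fun a b : Fin r => x (j.succAbove b) (s.1.orderIsoOfFin s.2 a) := by
    ext a b
    simp [cMat, Matrix.submatrix_apply, Fin.succAbove_last, Fin.snoc_castSucc]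
  rw [hsign, hentry, hsub]
  rfl

lemma cMat_mul {N r : ℕ} (y : Fin N → ℝ) (xs P : Fin (r + 1) → Fin N → ℝ)
    (A : Matrix (Fin (r+1)) (Fin (r+1)) ℝ)
    (hP : ∀ k, P k = ∑ j, A j k • xs j) (s : {s : Finset (Fin N) // s.card = r}) :
    cMat y P s = cMat y xs s * A := by
  ext i k
  rw [Matrix.mul_apply]
  refine Fin.lastCases ?_ (fun a => ?_) i
  · simp only [cMat, Matrix.of_apply, Fin.snoc_last]
    rw [hP k]
    simp only [dotProduct, Finset.sum_apply, Pi.smul_apply, smul_eq_mul,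
      Finset.sum_mul]
    rw [Finset.sum_comm]
    exact Finset.sum_congr rfl fun j _ => Finset.sum_congr rfl fun t _ => by ring
  · simp only [cMat, Matrix.of_apply, Fin.snoc_castSucc]
    rw [hP k]
    simp [Finset.sum_apply, mul_comm]


/-- If `V` is spanned by `k = r+1 ≥ 1` linearly independent integer polynomials
`P₀, …, P_r` of degree at most `m`, then
`Ĥ*(V) ≤ c ∑ᵢ (|Pᵢ(ξ)|/H(Pᵢ)) ∏ⱼ H(Pⱼ)`, where `Ĥ*(V) = ‖Ξ_m ⌟ (x₀ ∧ ⋯ ∧ x_r)‖`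
for any `ℤ`-basis `(x₀, …, x_r)` of `V ∩ ℤ^{m+1}`. -/
theorem Hstar_le (m : ℕ) (hm : 1 ≤ m) (ξ : ℝ) :
    ∃ c : ℝ, 0 < c ∧ ∀ (r : ℕ) (P : Fin (r + 1) → Polynomial ℤ),
      (∀ i, (P i).natDegree ≤ m) →
      LinearIndependent ℝ (fun i => toVec m (P i)) →
      ∀ xs : Fin (r + 1) → Fin (m + 1) → ℝ,
        IsZBasis (Submodule.span ℝ (Set.range fun i => toVec m (P i))) xs →
        contractNorm (XiVec m ξ) xs ≤
          c * ∑ i, (|Polynomial.aeval ξ (P i)| / heightZ (P i)) *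
            ∏ j, heightZ (P j) := by
  refine ⟨(2:ℝ)^(m+1) * (m.factorial : ℝ), by positivity, ?_⟩
  intro r P hdeg hLI xs hbasis
  obtain ⟨hint, hspan, hxsLI, hrep⟩ := hbasis
  -- basic facts
  have hPne : ∀ i, P i ≠ 0 := by
    intro i h
    apply hLI.ne_zero i
    funext j
    simp [toVec, h]
  have hH : ∀ i, 0 < heightZ (P i) := fun i => heightZ_pos (hPne i)
  have hrm : r ≤ m := by
    have h1 := hLI.fintype_card_le_finrank
    have h2 : Module.finrank ℝ (Fin (m+1) → ℝ) = m + 1 := Module.finrank_fin_fun ℝ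
    simp only [Fintype.card_fin, h2] at h1
    omega
  set S : ℝ := ∑ i, (|Polynomial.aeval ξ (P i)| / heightZ (P i)) * ∏ j, heightZ (P j)
    with hS
  have hS0 : 0 ≤ S := by
    refine Finset.sum_nonneg fun i _ => mul_nonneg (div_nonneg (abs_nonneg _) (hH i).le) ?_
    exact Finset.prod_nonneg fun j _ => (hH j).le
  have hdot : ∀ i, toVec m (P i) ⬝ᵥ XiVec m ξ = (Polynomial.aeval ξ) (P i) := by
    intro i
    rw [Polynomial.aeval_eq_sum_range' (Nat.lt_succ_of_le (hdeg i)) ξ,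
      ← Fin.sum_univ_eq_sum_range (fun j => (P i).coeff j • ξ ^ j) (m+1)]
    simp [dotProduct, toVec, XiVec, zsmul_eq_mul]
  -- bound on the contraction of the P-wedge
  have hPs : ∀ s : {s : Finset (Fin (m+1)) // s.card = r},
      |contractCoord (XiVec m ξ) (fun i => toVec m (P i)) s| ≤ (m.factorial : ℝ) * S := by
    intro s
    unfold contractCoord
    refine (Finset.abs_sum_le_sum_abs _ _).trans ?_
    have hterm : ∀ i : Fin (r+1),
        |(-1 : ℝ) ^ (r - (i : ℕ)) * ((fun i => toVec m (P i)) i ⬝ᵥ XiVec m ξ) *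
          wedgeCoord (fun a => toVec m (P (i.succAbove a))) s|
        ≤ (m.factorial : ℝ) * ((|Polynomial.aeval ξ (P i)| / heightZ (P i)) *
            ∏ j, heightZ (P j)) := by
      intro i
      rw [abs_mul, abs_mul, abs_pow, abs_neg, abs_one, one_pow, one_mul, hdot i]
      have hwedge : |wedgeCoord (fun a => toVec m (P (i.succAbove a))) s|
          ≤ (r.factorial : ℝ) * ∏ b : Fin r, heightZ (P (i.succAbove b)) := by
        unfold wedgeCoord
        exact abs_det_le' _ _ fun a b => abs_coeff_le_heightZ _ _
      have hprod : ∏ j, heightZ (P j)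
          = heightZ (P i) * ∏ b : Fin r, heightZ (P (i.succAbove b)) :=
        Fin.prod_univ_succAbove (fun j => heightZ (P j)) i
      have hfact : (r.factorial : ℝ) ≤ (m.factorial : ℝ) := by
        exact_mod_cast Nat.factorial_le hrm
      have hpr0 : 0 ≤ ∏ b : Fin r, heightZ (P (i.succAbove b)) :=
        Finset.prod_nonneg fun b _ => (hH _).le
      calc |(Polynomial.aeval ξ) (P i)| * |wedgeCoord (fun a => toVec m (P (i.succAbove a))) s|
          ≤ |(Polynomial.aeval ξ) (P i)| *
            ((r.factorial : ℝ) * ∏ b : Fin r, heightZ (P (i.succAbove b))) :=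
            mul_le_mul_of_nonneg_left hwedge (abs_nonneg _)
        _ = (r.factorial : ℝ) * ((|Polynomial.aeval ξ (P i)| / heightZ (P i)) *
              ∏ j, heightZ (P j)) := by
            rw [hprod, ← mul_assoc (|(Polynomial.aeval ξ) (P i)| / heightZ (P i)),
              div_mul_cancel₀ _ (hH i).ne']
            ring
        _ ≤ (m.factorial : ℝ) * ((|Polynomial.aeval ξ (P i)| / heightZ (P i)) *
              ∏ j, heightZ (P j)) := by
            refine mul_le_mul_of_nonneg_right hfact ?_
            refine mul_nonneg (div_nonneg (abs_nonneg _) (hH i).le) ?_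
            rw [hprod]; exact mul_nonneg (hH i).le hpr0
    refine le_trans (Finset.sum_le_sum fun i _ => hterm i) (le_of_eq ?_)
    rw [hS, Finset.mul_sum]
  -- the integer matrix relating xs to the P's
  have hcoef : ∀ i, ∃ c : Fin (r+1) → ℤ, toVec m (P i) = ∑ j, (c j : ℝ) • xs j := by
    intro i
    refine hrep _ (Submodule.subset_span ⟨i, rfl⟩) fun j => ⟨(P i).coeff j, rfl⟩
  choose co hco using hcoef
  set A : Matrix (Fin (r+1)) (Fin (r+1)) ℝ := fun j i => ((co i j : ℤ) : ℝ) with hA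
  have hPA : ∀ k, (fun i => toVec m (P i)) k = ∑ j, A j k • xs j := fun k => hco k
  have hdetA : A.det = (((Matrix.det fun j i => co i j : ℤ)) : ℝ) := by
    have h := RingHom.map_det (Int.castRingHom ℝ) (Matrix.of fun j i => co i j)
    have hAm : A = (Int.castRingHom ℝ).mapMatrix (Matrix.of fun j i => co i j) := by
      ext a b; rfl
    rw [hAm, ← h]
    rfl
  have hdetne : (Matrix.det fun j i => co i j : ℤ) ≠ 0 := by
    intro h0
    have hAdet0 : A.det = 0 := by rw [hdetA, h0]; simp
    obtain ⟨v, hv, hmul⟩ := (Matrix.exists_mulVec_eq_zero_iff).mpr hAdet0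
    apply hv
    have hsum : ∑ i, v i • (fun i => toVec m (P i)) i = 0 := by
      calc ∑ i, v i • toVec m (P i) = ∑ i, v i • ∑ j, A j i • xs j := by
            refine Finset.sum_congr rfl fun i _ => ?_
            rw [hco i]
        _ = ∑ j, (A *ᵥ v) j • xs j := by
            simp only [Finset.smul_sum, smul_smul]
            rw [Finset.sum_comm]
            refine Finset.sum_congr rfl fun j _ => ?_
            rw [Matrix.mulVec, dotProduct, Finset.sum_smul]
            exact Finset.sum_congr rfl fun i _ => by rw [mul_comm]
        _ = 0 := by rw [hmul]; simp
    have := Fintype.linearIndependent_iff.mp hLI v hsum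
    funext i
    exact this i
  have h1A : 1 ≤ |A.det| := by
    rw [hdetA]
    rw [show |(((Matrix.det fun j i => co i j : ℤ)) : ℝ)|
        = ((|Matrix.det fun j i => co i j| : ℤ) : ℝ) by push_cast; ring]
    exact_mod_cast Int.one_le_abs hdetne
  -- per-coordinate comparison
  have hcomp : ∀ s : {s : Finset (Fin (m+1)) // s.card = r},
      |contractCoord (XiVec m ξ) xs s|
        ≤ |contractCoord (XiVec m ξ) (fun i => toVec m (P i)) s| := by
    intro s
    rw [contractCoord_eq_det, contractCoord_eq_det,
      cMat_mul (XiVec m ξ) xs _ A hPA s, Matrix.det_mul, abs_mul]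
    exact le_mul_of_one_le_right (abs_nonneg _) h1A
  -- assemble
  set T : ℝ := (m.factorial : ℝ) * S with hT
  have hT0 : 0 ≤ T := mul_nonneg (by positivity) hS0
  have hsq : ∀ s : {s : Finset (Fin (m+1)) // s.card = r},
      (contractCoord (XiVec m ξ) xs s)^2 ≤ T^2 := by
    intro s
    rw [← sq_abs]
    exact pow_le_pow_left₀ (abs_nonneg _) ((hcomp s).trans (hPs s)) 2
  have hcard : (Fintype.card {s : Finset (Fin (m+1)) // s.card = r} : ℝ) ≤ (2:ℝ)^(m+1) := by
    have h1 : Fintype.card {s : Finset (Fin (m+1)) // s.card = r}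
        ≤ Fintype.card (Finset (Fin (m+1))) := Fintype.card_subtype_le _
    have h2 : Fintype.card (Finset (Fin (m+1))) = 2^(m+1) := by
      simp [Fintype.card_finset]
    rw [h2] at h1
    exact_mod_cast h1
  calc contractNorm (XiVec m ξ) xs
      ≤ Real.sqrt ((Fintype.card {s : Finset (Fin (m+1)) // s.card = r} : ℝ) * T^2) := by
        unfold contractNorm
        refine Real.sqrt_le_sqrt ?_
        calc ∑ s : {s : Finset (Fin (m+1)) // s.card = r}, (contractCoord (XiVec m ξ) xs s)^2
            ≤ ∑ _s : {s : Finset (Fin (m+1)) // s.card = r}, T^2 :=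
              Finset.sum_le_sum fun s _ => hsq s
          _ = (Fintype.card {s : Finset (Fin (m+1)) // s.card = r} : ℝ) * T^2 := by
              rw [Finset.sum_const, nsmul_eq_mul]; rfl
    _ ≤ Real.sqrt ((2:ℝ)^(m+1) * T^2) := by
        refine Real.sqrt_le_sqrt (mul_le_mul_of_nonneg_right hcard (by positivity))
    _ = Real.sqrt ((2:ℝ)^(m+1)) * T := by
        rw [Real.sqrt_mul (by positivity), Real.sqrt_sq hT0]
    _ ≤ (2:ℝ)^(m+1) * T := by
        have h1 : (1:ℝ) ≤ (2:ℝ)^(m+1) := one_le_pow₀ (by norm_num)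
        have hsq2 : Real.sqrt ((2:ℝ)^(m+1)) ≤ (2:ℝ)^(m+1) := by
          calc Real.sqrt ((2:ℝ)^(m+1)) ≤ Real.sqrt (((2:ℝ)^(m+1))^2) :=
              Real.sqrt_le_sqrt (by nlinarith)
            _ = (2:ℝ)^(m+1) := Real.sqrt_sq (by positivity)
        exact mul_le_mul_of_nonneg_right hsq2 hT0
    _ = (2:ℝ)^(m+1) * (m.factorial : ℝ) * S := by rw [hT]; ring
end
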